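/- Consider a database D, a set Σ of FDs, and an SJFCQ Q = Q₁ ⊎ Q₂, i.e., Q is the union of two nonempty CQs Q₁ and Q₂ sharing no atoms and no variables. Then rfreq(Q, D, Σ) = rfreq(Q₁, D, Σ) × rfreq(Q₂, D, Σ). -/

import Mathlib

open scoped Classical

/-- A fact over relation name `rel`, assigning a constant to each attribute. -/
structure DBFact (Rel Attr Const : Type*) where
  rel : Rel
  val : Attr → Const

/-- A functional dependency `rel : lhs → rhs`. -/
structure DBFD (Rel Attr : Type*) where
  rel : Rel
  lhs : Set Attr
  rhs : Set Attr

/-- A term of a conjunctive query: a variable or a constant. -/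
inductive DBTerm (Var Const : Type*) where
  | var : Var → DBTerm Var Const
  | const : Const → DBTerm Var Const

/-- An atom of a conjunctive query. -/
structure DBAtom (Rel Attr Var Const : Type*) where
  rel : Rel
  val : Attr → DBTerm Var Const

variable {Rel Attr Var Const : Type*}

/-- A database satisfies a single FD. -/
def satFD (D : Finset (DBFact Rel Attr Const)) (φ : DBFD Rel Attr) : Prop :=
  ∀ f ∈ D, ∀ g ∈ D, f.rel = φ.rel → g.rel = φ.rel →
    (∀ A ∈ φ.lhs, f.val A = g.val A) → ∀ A ∈ φ.rhs, f.val A = g.val A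

/-- A database satisfies a set of FDs. -/
def satFDs (D : Finset (DBFact Rel Attr Const)) (S : Set (DBFD Rel Attr)) : Prop :=
  ∀ φ ∈ S, satFD D φ

/-- `E` is a repair of `D` w.r.t. `S`: an inclusion-maximal consistent subset of `D`. -/
def isRepair (S : Set (DBFD Rel Attr)) (D E : Finset (DBFact Rel Attr Const)) : Prop :=
  E ⊆ D ∧ satFDs E S ∧ ∀ F, E ⊆ F → F ⊆ D → satFDs F S → F = E

/-- The set of repairs of `D` w.r.t. `S`. -/
noncomputable def rep (D : Finset (DBFact Rel Attr Const)) (S : Set (DBFD Rel Attr)) :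
    Finset (Finset (DBFact Rel Attr Const)) :=
  D.powerset.filter (fun E => isRepair S D E)

/-- Applying a homomorphism (a map from variables to constants) to an atom yields a fact. -/
def applyHom (h : Var → Const) (α : DBAtom Rel Attr Var Const) : DBFact Rel Attr Const :=
  ⟨α.rel, fun A => match α.val A with
    | DBTerm.var v => h v
    | DBTerm.const c => c⟩

/-- `D ⊨ Q`: there is a homomorphism from the CQ `Q` into `D`. -/
def entails (D : Finset (DBFact Rel Attr Const)) (Q : Finset (DBAtom Rel Attr Var Const)) :
    Prop :=
  ∃ h : Var → Const, ∀ α ∈ Q, applyHom h α ∈ D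

/-- The repairs of `D` w.r.t. `S` that entail `Q`. -/
noncomputable def repQ (D : Finset (DBFact Rel Attr Const)) (S : Set (DBFD Rel Attr))
    (Q : Finset (DBAtom Rel Attr Var Const)) : Finset (Finset (DBFact Rel Attr Const)) :=
  (rep D S).filter (fun E => entails E Q)

/-- The relative frequency of `Q` w.r.t. `D` and `S`. -/
noncomputable def rfreq (Q : Finset (DBAtom Rel Attr Var Const))
    (D : Finset (DBFact Rel Attr Const)) (S : Set (DBFD Rel Attr)) : ℚ :=
  ((repQ D S Q).card : ℚ) / ((rep D S).card : ℚ)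

/-- `Q` is self-join-free: no relation name occurs in two distinct atoms. -/
def sjf (Q : Finset (DBAtom Rel Attr Var Const)) : Prop :=
  ∀ α ∈ Q, ∀ β ∈ Q, α.rel = β.rel → α = β

/-- A canonical set of FDs with an LHS chain, given by the chain
`R : X₁ → Y₁, …, R : Xₙ → Yₙ` for each relation name `R`, with
`X₁ ⊊ X₂ ⊊ ⋯ ⊊ Xₙ`, each `Y_i` nonempty, `X_i ∩ Y_j = ∅` for all `i,j`,
and `Y_i ∩ Y_j = ∅` for `i ≠ j`. -/
def canonicalChain (chain : Rel → List (Set Attr × Set Attr)) : Prop :=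
  ∀ R : Rel,
    ((chain R).Pairwise fun a b => a.1 ⊂ b.1) ∧
    (∀ xy ∈ chain R, (xy.2 : Set Attr).Nonempty) ∧
    (∀ xy ∈ chain R, ∀ xy' ∈ chain R, xy.1 ∩ xy'.2 = ∅) ∧
    ((chain R).Pairwise fun a b => a.2 ∩ b.2 = ∅)

/-- The set of FDs induced by a chain. -/
def chainFDs (chain : Rel → List (Set Attr × Set Attr)) : Set (DBFD Rel Attr) :=
  {φ | ∃ xy ∈ chain φ.rel, φ.lhs = xy.1 ∧ φ.rhs = xy.2}

/-- The `i`-th FD of the chain `L` has some attribute carrying a variable in atom `α`. -/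
def chainVarAt (L : List (Set Attr × Set Attr)) (α : DBAtom Rel Attr Var Const) (i : ℕ) :
    Prop :=
  ∃ xy, L[i]? = some xy ∧ ∃ A ∈ xy.1 ∪ xy.2, ∃ v, α.val A = DBTerm.var v

/-- The index of the primary FD of the chain `L` w.r.t. the atom `α` (if it exists):
the first FD some of whose attributes carries a variable in `α`. -/
noncomputable def primaryIdx (L : List (Set Attr × Set Attr))
    (α : DBAtom Rel Attr Var Const) : Option ℕ :=
  if h : ∃ i, chainVarAt L α i then some (Nat.find h) else none

/-- The primary FD of the chain `L` w.r.t. the atom `α` (if it exists). -/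
noncomputable def primaryFD (L : List (Set Attr × Set Attr))
    (α : DBAtom Rel Attr Var Const) : Option (Set Attr × Set Attr) :=
  (primaryIdx L α).bind fun i => L[i]?

/-- The primary prefix of the chain `L` w.r.t. the atom `α`: the FDs strictly before the
primary FD, or the whole chain if there is no primary FD. -/
noncomputable def primaryPrefix (L : List (Set Attr × Set Attr))
    (α : DBAtom Rel Attr Var Const) : List (Set Attr × Set Attr) :=
  L.take ((primaryIdx L α).getD L.length)

/-- The primary-lhs positions (attributes) of the atom `α` w.r.t. the chain `L`. -/
noncomputable def primaryLhs (L : List (Set Attr × Set Attr))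
    (α : DBAtom Rel Attr Var Const) : Set Attr :=
  match primaryFD L α with
  | some xy => xy.1
  | none => Set.univ

/-- The variables of `α` occurring at primary-lhs positions. -/
noncomputable def pvar (L : List (Set Attr × Set Attr))
    (α : DBAtom Rel Attr Var Const) : Set Var :=
  {v | ∃ A ∈ primaryLhs L α, α.val A = DBTerm.var v}

/-- A liaison variable of `Q`: a variable with more than one occurrence in `Q`. -/
def liaison (Q : Finset (DBAtom Rel Attr Var Const)) (v : Var) : Prop :=
  ∃ α ∈ Q, ∃ β ∈ Q, ∃ A B, α.val A = DBTerm.var v ∧ β.val B = DBTerm.var v ∧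
    (α ≠ β ∨ A ≠ B)

/-- The complex part `comp(Q,Σ)` of `Q` w.r.t. the chain. -/
noncomputable def compPart (chain : Rel → List (Set Attr × Set Attr))
    (Q : Finset (DBAtom Rel Attr Var Const)) : Finset (DBAtom Rel Attr Var Const) :=
  Q.filter fun α => ∃ A, A ∉ primaryLhs (chain α.rel) α ∧
    ((∃ c, α.val A = DBTerm.const c) ∨ ∃ v, α.val A = DBTerm.var v ∧ liaison Q v) ∧
    ∀ xy ∈ primaryPrefix (chain α.rel) α, A ∉ xy.1 ∪ xy.2

/-- The fact `f` agrees with the atom `α` at attribute `A`, i.e. `α[A]` is the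
constant `f[A]`. -/
def agreesAt (f : DBFact Rel Attr Const) (α : DBAtom Rel Attr Var Const) (A : Attr) : Prop :=
  α.val A = DBTerm.const (f.val A)

/-- `D_conf^{Σ,Q}`: the facts of `D` conflicting with `Q` via an FD of the primary prefix. -/
noncomputable def dconf (chain : Rel → List (Set Attr × Set Attr))
    (Q : Finset (DBAtom Rel Attr Var Const)) (D : Finset (DBFact Rel Attr Const)) :
    Finset (DBFact Rel Attr Const) :=
  D.filter fun f => ∃ α ∈ Q, α.rel = f.rel ∧
    ∃ xy ∈ primaryPrefix (chain α.rel) α,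
      (∀ A ∈ xy.1, agreesAt f α A) ∧ ∃ B ∈ xy.2, ¬ agreesAt f α B

/-- `D_ind^{Σ,Q}`: the facts of `D \ D_conf^{Σ,Q}` disagreeing with `Q` on the lhs of an
FD of the primary prefix. -/
noncomputable def dind (chain : Rel → List (Set Attr × Set Attr))
    (Q : Finset (DBAtom Rel Attr Var Const)) (D : Finset (DBFact Rel Attr Const)) :
    Finset (DBFact Rel Attr Const) :=
  (D \ dconf chain Q D).filter fun f => ∃ α ∈ Q, α.rel = f.rel ∧
    ∃ xy ∈ primaryPrefix (chain α.rel) α, ∃ A ∈ xy.1, ¬ agreesAt f α A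

/-- The active domain of `D`: the constants occurring in `D`. -/
noncomputable def adom [Fintype Attr] (D : Finset (DBFact Rel Attr Const)) : Finset Const :=
  D.biUnion fun f => Finset.univ.image f.val

/-- Substituting a constant for a variable in a term. -/
noncomputable def substTerm (x : Var) (c : Const) : DBTerm Var Const → DBTerm Var Const
  | DBTerm.var v => if v = x then DBTerm.const c else DBTerm.var v
  | DBTerm.const d => DBTerm.const d

/-- Substituting a constant for a variable in an atom. -/
noncomputable def substAtom (x : Var) (c : Const) (α : DBAtom Rel Attr Var Const) :
    DBAtom Rel Attr Var Const :=
  ⟨α.rel, fun A => substTerm x c (α.val A)⟩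

/-- `Q_{x↦c}`: the query obtained from `Q` by replacing the variable `x` with `c`. -/
noncomputable def substQ (x : Var) (c : Const) (Q : Finset (DBAtom Rel Attr Var Const)) :
    Finset (DBAtom Rel Attr Var Const) :=
  Q.image (substAtom x c)

/-- The variables occurring in `Q`. -/
def qvars (Q : Finset (DBAtom Rel Attr Var Const)) : Set Var :=
  {v | ∃ α ∈ Q, ∃ A, α.val A = DBTerm.var v}

/-- `S` has an LHS chain: the left-hand sides of FDs over the same relation are
⊆-comparable. -/
def hasLHSChain (S : Set (DBFD Rel Attr)) : Prop :=
  ∀ φ ∈ S, ∀ ψ ∈ S, φ.rel = ψ.rel → φ.lhs ⊆ ψ.lhs ∨ ψ.lhs ⊆ φ.lhs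


section Aux
variable {Rel Attr Var Const : Type*}

lemma satFDs_mono {E F : Finset (DBFact Rel Attr Const)} {S : Set (DBFD Rel Attr)}
    (h : E ⊆ F) (hF : satFDs F S) : satFDs E S :=
  fun φ hφ f hf g hg => hF φ hφ f (h hf) g (h hg)

lemma mem_rep_iff {D E : Finset (DBFact Rel Attr Const)} {S : Set (DBFD Rel Attr)} :
    E ∈ rep D S ↔ isRepair S D E := by
  simp only [rep, Finset.mem_filter, Finset.mem_powerset, and_iff_right_iff_imp]
  exact fun h => h.1

lemma rep_nonempty (S : Set (DBFD Rel Attr)) (D : Finset (DBFact Rel Attr Const)) :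
    (rep D S).Nonempty := by
  have hne : (D.powerset.filter (fun E => satFDs E S)).Nonempty := by
    refine ⟨∅, ?_⟩
    simp only [Finset.mem_filter, Finset.mem_powerset]
    exact ⟨Finset.empty_subset _, fun φ hφ f hf => absurd hf (Finset.notMem_empty f)⟩
  obtain ⟨E, hE, hmax⟩ := Finset.exists_max_image _ Finset.card hne
  simp only [Finset.mem_filter, Finset.mem_powerset] at hE
  refine ⟨E, mem_rep_iff.2 ⟨hE.1, hE.2, fun F hEF hFD hFsat => ?_⟩⟩
  have hF : F ∈ D.powerset.filter (fun E => satFDs E S) := by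
    simp only [Finset.mem_filter, Finset.mem_powerset]; exact ⟨hFD, hFsat⟩
  exact (Finset.eq_of_subset_of_card_le hEF (hmax F hF)).symm

lemma satFDs_union (q : Rel → Prop) {E F : Finset (DBFact Rel Attr Const)}
    {S : Set (DBFD Rel Attr)} (hE : ∀ f ∈ E, q f.rel) (hF : ∀ f ∈ F, ¬ q f.rel)
    (h1 : satFDs E S) (h2 : satFDs F S) : satFDs (E ∪ F) S := by
  intro φ hφ f hf g hg hf' hg' hlhs A hA
  rcases Finset.mem_union.1 hf with hf | hf <;> rcases Finset.mem_union.1 hg with hg | hg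
  · exact h1 φ hφ f hf g hg hf' hg' hlhs A hA
  · exact absurd (hf' ▸ hE f hf) (hg' ▸ hF g hg)
  · exact absurd (hg' ▸ hE g hg) (hf' ▸ hF f hf)
  · exact h2 φ hφ f hf g hg hf' hg' hlhs A hA

lemma filter_union_left (q : Rel → Prop) {Ea Eb : Finset (DBFact Rel Attr Const)}
    (ha : ∀ f ∈ Ea, q f.rel) (hb : ∀ f ∈ Eb, ¬ q f.rel) :
    (Ea ∪ Eb).filter (fun f => q f.rel) = Ea := by
  ext f
  simp only [Finset.mem_filter, Finset.mem_union]
  constructor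
  · rintro ⟨hf | hf, hq⟩
    · exact hf
    · exact absurd hq (hb f hf)
  · exact fun hf => ⟨Or.inl hf, ha f hf⟩

lemma filter_union_right (q : Rel → Prop) {Ea Eb : Finset (DBFact Rel Attr Const)}
    (ha : ∀ f ∈ Ea, q f.rel) (hb : ∀ f ∈ Eb, ¬ q f.rel) :
    (Ea ∪ Eb).filter (fun f => ¬ q f.rel) = Eb := by
  ext f
  simp only [Finset.mem_filter, Finset.mem_union]
  constructor
  · rintro ⟨hf | hf, hq⟩
    · exact absurd (ha f hf) hq
    · exact hf
  · exact fun hf => ⟨Or.inr hf, hb f hf⟩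

lemma isRepair_split (q : Rel → Prop) {S : Set (DBFD Rel Attr)}
    {D E : Finset (DBFact Rel Attr Const)} (hE : E ⊆ D) :
    isRepair S D E ↔
      isRepair S (D.filter fun f => q f.rel) (E.filter fun f => q f.rel) ∧
      isRepair S (D.filter fun f => ¬ q f.rel) (E.filter fun f => ¬ q f.rel) := by
  constructor
  · rintro ⟨hsub, hsat, hmax⟩
    constructor
    · refine ⟨Finset.filter_subset_filter _ hsub, satFDs_mono (Finset.filter_subset _ _) hsat, ?_⟩
      intro F hEF hFD hFsat
      have hFq : ∀ f ∈ F, q f.rel := fun f hf => (Finset.mem_filter.1 (hFD hf)).2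
      have hG : E ⊆ F ∪ E.filter (fun f => ¬ q f.rel) := by
        intro f hf
        by_cases h : q f.rel
        · exact Finset.mem_union_left _ (hEF (Finset.mem_filter.2 ⟨hf, h⟩))
        · exact Finset.mem_union_right _ (Finset.mem_filter.2 ⟨hf, h⟩)
      have hGD : F ∪ E.filter (fun f => ¬ q f.rel) ⊆ D :=
        Finset.union_subset (hFD.trans (Finset.filter_subset _ _))
          ((Finset.filter_subset _ _).trans hsub)
      have hGsat : satFDs (F ∪ E.filter (fun f => ¬ q f.rel)) S :=
        satFDs_union q hFq (fun f hf => (Finset.mem_filter.1 hf).2) hFsat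
          (satFDs_mono (Finset.filter_subset _ _) hsat)
      have hGE := hmax _ hG hGD hGsat
      calc F = (F ∪ E.filter (fun f => ¬ q f.rel)).filter (fun f => q f.rel) :=
            (filter_union_left q hFq (fun f hf => (Finset.mem_filter.1 hf).2)).symm
        _ = E.filter (fun f => q f.rel) := by rw [hGE]
    · refine ⟨Finset.filter_subset_filter _ hsub, satFDs_mono (Finset.filter_subset _ _) hsat, ?_⟩
      intro F hEF hFD hFsat
      have hFq : ∀ f ∈ F, ¬ q f.rel := fun f hf => (Finset.mem_filter.1 (hFD hf)).2
      have hG : E ⊆ E.filter (fun f => q f.rel) ∪ F := by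
        intro f hf
        by_cases h : q f.rel
        · exact Finset.mem_union_left _ (Finset.mem_filter.2 ⟨hf, h⟩)
        · exact Finset.mem_union_right _ (hEF (Finset.mem_filter.2 ⟨hf, h⟩))
      have hGD : E.filter (fun f => q f.rel) ∪ F ⊆ D :=
        Finset.union_subset ((Finset.filter_subset _ _).trans hsub)
          (hFD.trans (Finset.filter_subset _ _))
      have hGsat : satFDs (E.filter (fun f => q f.rel) ∪ F) S :=
        satFDs_union q (fun f hf => (Finset.mem_filter.1 hf).2) hFq
          (satFDs_mono (Finset.filter_subset _ _) hsat) hFsat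
      have hGE := hmax _ hG hGD hGsat
      calc F = (E.filter (fun f => q f.rel) ∪ F).filter (fun f => ¬ q f.rel) :=
            (filter_union_right q (fun f hf => (Finset.mem_filter.1 hf).2) hFq).symm
        _ = E.filter (fun f => ¬ q f.rel) := by rw [hGE]
  · rintro ⟨⟨hs1, ha1, hm1⟩, ⟨hs2, ha2, hm2⟩⟩
    refine ⟨hE, ?_, ?_⟩
    · have := satFDs_union q (fun f hf => (Finset.mem_filter.1 hf).2)
        (fun f hf => (Finset.mem_filter.1 hf).2) ha1 ha2
      rwa [Finset.filter_union_filter_not_eq] at this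
    · intro F hEF hFD hFsat
      have h1 := hm1 (F.filter fun f => q f.rel) (Finset.filter_subset_filter _ hEF)
        (Finset.filter_subset_filter _ hFD) (satFDs_mono (Finset.filter_subset _ _) hFsat)
      have h2 := hm2 (F.filter fun f => ¬ q f.rel) (Finset.filter_subset_filter _ hEF)
        (Finset.filter_subset_filter _ hFD) (satFDs_mono (Finset.filter_subset _ _) hFsat)
      calc F = F.filter (fun f => q f.rel) ∪ F.filter (fun f => ¬ q f.rel) :=
            (Finset.filter_union_filter_not_eq _ _).symm
        _ = E.filter (fun f => q f.rel) ∪ E.filter (fun f => ¬ q f.rel) := by rw [h1, h2]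
        _ = E := Finset.filter_union_filter_not_eq _ _

lemma card_split (q : Rel → Prop) (S : Set (DBFD Rel Attr))
    (D : Finset (DBFact Rel Attr Const))
    (P₁ P₂ : Finset (DBFact Rel Attr Const) → Prop) :
    ((rep D S).filter fun E =>
        P₁ (E.filter fun f => q f.rel) ∧ P₂ (E.filter fun f => ¬ q f.rel)).card
      = ((rep (D.filter fun f => q f.rel) S).filter P₁).card *
        ((rep (D.filter fun f => ¬ q f.rel) S).filter P₂).card := by
  rw [← Finset.card_product]
  refine Finset.card_nbij' (fun E => (E.filter fun f => q f.rel, E.filter fun f => ¬ q f.rel))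
    (fun p => p.1 ∪ p.2) ?_ ?_ ?_ ?_
  · intro E hE
    simp only [Finset.mem_coe, Finset.mem_filter, Finset.mem_product] at hE ⊢
    obtain ⟨hrep, hP1, hP2⟩ := hE
    have hrep' := mem_rep_iff.1 hrep
    have := (isRepair_split q hrep'.1).1 hrep'
    exact ⟨⟨mem_rep_iff.2 this.1, hP1⟩, ⟨mem_rep_iff.2 this.2, hP2⟩⟩
  · rintro ⟨Ea, Eb⟩ hp
    simp only [Finset.mem_coe, Finset.mem_product, Finset.mem_filter] at hp
    obtain ⟨⟨hra, hP1⟩, ⟨hrb, hP2⟩⟩ := hp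
    have hra' := mem_rep_iff.1 hra
    have hrb' := mem_rep_iff.1 hrb
    have haq : ∀ f ∈ Ea, q f.rel := fun f hf => (Finset.mem_filter.1 (hra'.1 hf)).2
    have hbq : ∀ f ∈ Eb, ¬ q f.rel := fun f hf => (Finset.mem_filter.1 (hrb'.1 hf)).2
    have hsub : Ea ∪ Eb ⊆ D :=
      Finset.union_subset (hra'.1.trans (Finset.filter_subset _ _))
        (hrb'.1.trans (Finset.filter_subset _ _))
    have hfl := filter_union_left q haq hbq
    have hfr := filter_union_right q haq hbq
    simp only [Finset.mem_coe, Finset.mem_filter, hfl, hfr]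
    refine ⟨mem_rep_iff.2 ((isRepair_split q hsub).2 ?_), hP1, hP2⟩
    rw [hfl, hfr]
    exact ⟨hra', hrb'⟩
  · intro E _
    exact Finset.filter_union_filter_not_eq _ _
  · rintro ⟨Ea, Eb⟩ hp
    simp only [Finset.mem_coe, Finset.mem_product, Finset.mem_filter] at hp
    obtain ⟨⟨hra, _⟩, ⟨hrb, _⟩⟩ := hp
    have haq : ∀ f ∈ Ea, q f.rel := fun f hf =>
      (Finset.mem_filter.1 ((mem_rep_iff.1 hra).1 hf)).2
    have hbq : ∀ f ∈ Eb, ¬ q f.rel := fun f hf =>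
      (Finset.mem_filter.1 ((mem_rep_iff.1 hrb).1 hf)).2
    simp only [filter_union_left q haq hbq, filter_union_right q haq hbq]

lemma entails_mono {E F : Finset (DBFact Rel Attr Const)}
    {Q' : Finset (DBAtom Rel Attr Var Const)} (h : E ⊆ F) (hE : entails E Q') :
    entails F Q' := by
  obtain ⟨hh, hm⟩ := hE
  exact ⟨hh, fun α hα => h (hm α hα)⟩

lemma entails_filter_iff (q : Rel → Prop) {E : Finset (DBFact Rel Attr Const)}
    {Q' : Finset (DBAtom Rel Attr Var Const)} (hQ : ∀ α ∈ Q', q α.rel) :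
    entails E Q' ↔ entails (E.filter fun f => q f.rel) Q' := by
  constructor
  · rintro ⟨h, hm⟩
    refine ⟨h, fun α hα => Finset.mem_filter.2 ⟨hm α hα, ?_⟩⟩
    exact hQ α hα
  · exact entails_mono (Finset.filter_subset _ _)

lemma applyHom_congr {h h' : Var → Const} {α : DBAtom Rel Attr Var Const}
    (hv : ∀ A v, α.val A = DBTerm.var v → h v = h' v) :
    applyHom h α = applyHom h' α := by
  unfold applyHom
  congr 1
  funext A
  cases hA : α.val A with
  | var v => simp only [hA]; exact hv A v hA
  | const c => simp only [hA]

lemma entails_union_iff {E : Finset (DBFact Rel Attr Const)}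
    {Q₁ Q₂ : Finset (DBAtom Rel Attr Var Const)}
    (hvars : Disjoint (qvars Q₁) (qvars Q₂)) :
    entails E (Q₁ ∪ Q₂) ↔ entails E Q₁ ∧ entails E Q₂ := by
  constructor
  · rintro ⟨h, hm⟩
    exact ⟨⟨h, fun α hα => hm α (Finset.mem_union_left _ hα)⟩,
      ⟨h, fun α hα => hm α (Finset.mem_union_right _ hα)⟩⟩
  · rintro ⟨⟨h₁, hm₁⟩, ⟨h₂, hm₂⟩⟩
    refine ⟨fun v => if v ∈ qvars Q₁ then h₁ v else h₂ v, fun α hα => ?_⟩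
    rcases Finset.mem_union.1 hα with hα | hα
    · have : applyHom (fun v => if v ∈ qvars Q₁ then h₁ v else h₂ v) α = applyHom h₁ α := by
        refine applyHom_congr fun A v hAv => ?_
        have : v ∈ qvars Q₁ := ⟨α, hα, A, hAv⟩
        simp [this]
      rw [this]; exact hm₁ α hα
    · have : applyHom (fun v => if v ∈ qvars Q₁ then h₁ v else h₂ v) α = applyHom h₂ α := by
        refine applyHom_congr fun A v hAv => ?_
        have hv2 : v ∈ qvars Q₂ := ⟨α, hα, A, hAv⟩
        have hv1 : v ∉ qvars Q₁ := Set.disjoint_right.1 hvars hv2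
        simp [hv1]
      rw [this]; exact hm₂ α hα

end Aux

section Aux2
variable {Rel Attr Var Const : Type*}

lemma entails_filter_not_iff (q : Rel → Prop) {E : Finset (DBFact Rel Attr Const)}
    {Q' : Finset (DBAtom Rel Attr Var Const)} (hQ : ∀ α ∈ Q', ¬ q α.rel) :
    entails E Q' ↔ entails (E.filter fun f => ¬ q f.rel) Q' := by
  constructor
  · rintro ⟨h, hm⟩
    exact ⟨h, fun α hα => Finset.mem_filter.2 ⟨hm α hα, hQ α hα⟩⟩
  · exact entails_mono (Finset.filter_subset _ _)

end Aux2

set_option maxHeartbeats 1000000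

/-- If the SJFCQ `Q` is a disjoint union `Q₁ ⊎ Q₂` of nonempty CQs sharing no atoms and
no variables, then `rfreq(Q,D,Σ) = rfreq(Q₁,D,Σ) × rfreq(Q₂,D,Σ)`. -/
theorem stmt_9 {Rel Attr Var Const : Type*} (S : Set (DBFD Rel Attr))
    (D : Finset (DBFact Rel Attr Const))
    (Q Q₁ Q₂ : Finset (DBAtom Rel Attr Var Const))
    (hQ : Q = Q₁ ∪ Q₂) (h1 : Q₁.Nonempty) (h2 : Q₂.Nonempty)
    (hatoms : Disjoint Q₁ Q₂) (hvars : Disjoint (qvars Q₁) (qvars Q₂))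
    (hsjf : sjf Q) :
    rfreq Q D S = rfreq Q₁ D S * rfreq Q₂ D S := by
  obtain ⟨q, hQ1q, hQ2q⟩ :
      ∃ q : Rel → Prop, (∀ α ∈ Q₁, q α.rel) ∧ (∀ α ∈ Q₂, ¬ q α.rel) := by
    refine ⟨fun r => ∃ α ∈ Q₁, α.rel = r, fun α hα => ⟨α, hα, rfl⟩, ?_⟩
    rintro α hα ⟨β, hβ, hrel⟩
    have hβQ : β ∈ Q := by rw [hQ]; exact Finset.mem_union_left _ hβ
    have hαQ : α ∈ Q := by rw [hQ]; exact Finset.mem_union_right _ hα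
    have : β = α := hsjf β hβQ α hαQ hrel
    exact (Finset.disjoint_left.1 hatoms hβ) (this ▸ hα)
  set Da := D.filter (fun f => q f.rel) with hDa
  set Db := D.filter (fun f => ¬ q f.rel) with hDb
  have hrepD : (rep D S).card = (rep Da S).card * (rep Db S).card := by
    have h := card_split q S D (fun _ => True) (fun _ => True)
    simpa [hDa, hDb] using h
  have hQcard : (repQ D S Q).card = (repQ Da S Q₁).card * (repQ Db S Q₂).card := by
    have h := card_split q S D (fun Ea => entails Ea Q₁) (fun Eb => entails Eb Q₂)
    simp only [repQ, hDa, hDb]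
    convert h using 2
    ext E
    simp only [Finset.mem_filter]
    refine and_congr_right fun hE => ?_
    rw [hQ, entails_union_iff hvars, entails_filter_iff q hQ1q,
      entails_filter_not_iff q hQ2q]
  have hQ1card : (repQ D S Q₁).card = (repQ Da S Q₁).card * (rep Db S).card := by
    have h := card_split q S D (fun Ea => entails Ea Q₁) (fun _ => True)
    simp only [repQ, hDa, hDb]
    simp only [Finset.filter_true] at h
    convert h using 2
    ext E
    simp only [Finset.mem_filter, and_true]
    refine and_congr_right fun hE => ?_
    rw [entails_filter_iff q hQ1q]
  have hQ2card : (repQ D S Q₂).card = (rep Da S).card * (repQ Db S Q₂).card := by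
    have h := card_split q S D (fun _ => True) (fun Eb => entails Eb Q₂)
    simp only [repQ, hDa, hDb]
    simp only [Finset.filter_true] at h
    convert h using 2
    ext E
    simp only [Finset.mem_filter, true_and]
    refine and_congr_right fun hE => ?_
    rw [entails_filter_not_iff q hQ2q]
  have hane : ((rep Da S).card : ℚ) ≠ 0 :=
    Nat.cast_ne_zero.2 (Finset.card_pos.2 (rep_nonempty S Da)).ne'
  have hbne : ((rep Db S).card : ℚ) ≠ 0 :=
    Nat.cast_ne_zero.2 (Finset.card_pos.2 (rep_nonempty S Db)).ne'
  unfold rfreq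
  rw [hrepD, hQcard, hQ1card, hQ2card]
  push_cast
  field_simp
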